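/- Every '+−' Motzkin path reduces to the empty word under the signature rewriting system. -/

import Mathlib

/-- The three-letter alphabet `{+, −, ±}` of signatures. -/
inductive Letter
  | plus
  | minus
  | pm
  deriving DecidableEq

/-- Value of a letter: `v(+) = 1`, `v(−) = −1`, `v(±) = 0`. -/
def Letter.val : Letter → ℤ
  | .plus => 1
  | .minus => -1
  | .pm => 0

/-- The sum of values of a word. -/
def wordVal (w : List Letter) : ℤ := (w.map Letter.val).sum

/-- A word is a '+−' Motzkin path: it begins with `+`, ends with `−`, has total
value `0`, and all of its proper nonempty initial segments have strictly positive
value sum. -/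
def IsMotzkinWord (p : List Letter) : Prop :=
  p.head? = some Letter.plus ∧ p.getLast? = some Letter.minus ∧
    wordVal p = 0 ∧ ∀ k, 0 < k → k < p.length → 0 < wordVal (p.take k)

/-- One application of a signature reduction rule to a contiguous subword:
'+−' ↦ ε, '+±−' ↦ ε, '+±' ↦ '+', '±−' ↦ '−'. -/
inductive Step : List Letter → List Letter → Prop
  | plus_minus (x y : List Letter) :
      Step (x ++ [Letter.plus, Letter.minus] ++ y) (x ++ y)
  | plus_pm_minus (x y : List Letter) :
      Step (x ++ [Letter.plus, Letter.pm, Letter.minus] ++ y) (x ++ y)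
  | plus_pm (x y : List Letter) :
      Step (x ++ [Letter.plus, Letter.pm] ++ y) (x ++ [Letter.plus] ++ y)
  | pm_minus (x y : List Letter) :
      Step (x ++ [Letter.pm, Letter.minus] ++ y) (x ++ [Letter.minus] ++ y)


lemma wordVal_append (a b : List Letter) : wordVal (a ++ b) = wordVal a + wordVal b := by
  simp [wordVal]

lemma wordVal_take_append (a b : List Letter) (k : ℕ) :
    wordVal ((a ++ b).take k) = wordVal (a.take k) + wordVal (b.take (k - a.length)) := by
  rw [List.take_append, wordVal_append]

lemma middle_cut (u m y : List Letter) (hm : wordVal m = 0) (hu : u ≠ []) (hy : y ≠ [])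
    (h : IsMotzkinWord (u ++ m ++ y)) : IsMotzkinWord (u ++ y) := by
  obtain ⟨hhead, hlast, hval, hpref⟩ := h
  have hy1 : 0 < y.length := List.length_pos_iff.mpr hy
  refine ⟨?_, ?_, ?_, ?_⟩
  · cases u with
    | nil => exact absurd rfl hu
    | cons u0 u' => simpa using hhead
  · rw [List.getLast?_append_of_ne_nil _ hy] at hlast
    rw [List.getLast?_append_of_ne_nil _ hy]
    exact hlast
  · rw [wordVal_append, wordVal_append] at hval
    rw [wordVal_append]
    omega
  · intro k hk0 hklt
    rw [List.length_append] at hklt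
    rcases le_or_gt k u.length with hk | hk
    · have h1 : wordVal ((u ++ y).take k) = wordVal ((u ++ m ++ y).take k) := by
        rw [wordVal_take_append u y, wordVal_take_append (u ++ m) y, wordVal_take_append u m]
        have e1 : k - u.length = 0 := by omega
        have e2 : k - (u ++ m).length = 0 := by
          rw [List.length_append]; omega
        rw [e1, e2]
        simp [wordVal]
      rw [h1]
      refine hpref k hk0 ?_
      simp only [List.length_append]
      omega
    · have h1 : wordVal ((u ++ y).take k) = wordVal ((u ++ m ++ y).take (k + m.length)) := by
        rw [wordVal_take_append u y, wordVal_take_append (u ++ m) y,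
          List.take_of_length_le (le_of_lt hk),
          List.take_of_length_le (by rw [List.length_append]; omega :
            (u ++ m).length ≤ k + m.length),
          wordVal_append]
        have e : k + m.length - (u ++ m).length = k - u.length := by
          rw [List.length_append]; omega
        rw [e]
        omega
      rw [h1]
      refine hpref _ (by omega) ?_
      simp only [List.length_append]
      omega

lemma exists_step (p : List Letter) (h : IsMotzkinWord p) :
    p = [Letter.plus, Letter.minus] ∨
      ∃ q, Step p q ∧ IsMotzkinWord q ∧ q.length < p.length := by
  obtain ⟨x, t, rfl⟩ : ∃ x t, p = x :: t := by
    cases p with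
    | nil => exact absurd h.1 (by simp)
    | cons x t => exact ⟨x, t, rfl⟩
  have hx : x = Letter.plus := by simpa using h.1
  subst hx
  set pr : Letter → Bool := fun l => decide (l = Letter.plus) with hpr
  have hsplit : (Letter.plus :: t).takeWhile pr ++ (Letter.plus :: t).dropWhile pr
      = Letter.plus :: t := List.takeWhile_append_dropWhile
  set a := (Letter.plus :: t).takeWhile pr with ha
  set d := (Letter.plus :: t).dropWhile pr with hd
  have hamem : ∀ x ∈ a, x = Letter.plus := by
    intro x hxa
    have := List.mem_takeWhile_imp (p := pr) (l := Letter.plus :: t) hxa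
    simpa [hpr] using this
  have hane : a ≠ [] := by
    rw [ha, List.takeWhile_cons]
    simp [hpr]
  have hdne : d ≠ [] := by
    intro hdnil
    have ha' : a = Letter.plus :: t := by
      rw [← hsplit, hdnil, List.append_nil]
    obtain ⟨hne, heq⟩ := List.mem_getLast?_eq_getLast h.2.1
    have hmem := List.getLast_mem hne
    rw [← heq] at hmem
    rw [← ha'] at hmem
    exact absurd (hamem _ hmem) (by simp)
  obtain ⟨c, y, hcy⟩ := List.exists_cons_of_ne_nil hdne
  have hcne : c ≠ Letter.plus := by
    intro hc
    have h2 := List.head?_dropWhile_not pr (Letter.plus :: t)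
    rw [← hd, hcy] at h2
    simp only [List.head?_cons] at h2
    simp [hpr, hc] at h2
  have halast : a.getLast hane = Letter.plus := hamem _ (List.getLast_mem hane)
  have hbsplit : a.dropLast ++ [Letter.plus] = a := by
    conv_rhs => rw [← List.dropLast_append_getLast hane]
    rw [halast]
  set b := a.dropLast with hbdef
  have hP : Letter.plus :: t = b ++ [Letter.plus, c] ++ y := by
    rw [← hsplit, hcy, ← hbsplit]
    simp
  have hbplus : ∀ z ∈ b, z = Letter.plus := by
    intro z hz
    exact hamem z (by rw [← hbsplit]; exact List.mem_append_left _ hz)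
  cases c with
  | plus => exact absurd rfl hcne
  | minus =>
    by_cases hb0 : b = []
    · by_cases hy0 : y = []
      · left
        rw [hP, hb0, hy0]
        simp
      · exfalso
        rw [hP, hb0, List.nil_append] at h
        have hy1 : 0 < y.length := List.length_pos_iff.mpr hy0
        have hpos := h.2.2.2 2 (by omega) (by simp; omega)
        simp [wordVal, Letter.val] at hpos
    · have hy0 : y ≠ [] := by
        intro hy0
        rw [hP, hy0, List.append_nil] at h
        have hb1 : 0 < b.length := List.length_pos_iff.mpr hb0
        have hpos := h.2.2.2 b.length hb1 (by simp)
        have hval := h.2.2.1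
        rw [wordVal_append] at hval
        have hm0 : wordVal [Letter.plus, Letter.minus] = 0 := by
          simp [wordVal, Letter.val]
        rw [hm0] at hval
        have htk : (b ++ [Letter.plus, Letter.minus]).take b.length = b := by
          rw [List.take_append, List.take_length, Nat.sub_self]
          simp
        rw [htk] at hpos
        omega
      right
      refine ⟨b ++ y, ?_, ?_, ?_⟩
      · rw [hP]; exact Step.plus_minus b y
      · rw [hP] at h
        exact middle_cut b [Letter.plus, Letter.minus] y
          (by simp [wordVal, Letter.val]) hb0 hy0 h
      · rw [hP]; simp
  | pm =>
    right
    have hy0 : y ≠ [] := by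
      intro hy0
      rw [hP, hy0, List.append_nil] at h
      have := h.2.1
      rw [List.getLast?_append_of_ne_nil _ (by simp : [Letter.plus, Letter.pm] ≠ [])] at this
      simp at this
    refine ⟨b ++ [Letter.plus] ++ y, ?_, ?_, ?_⟩
    · rw [hP]; exact Step.plus_pm b y
    · rw [hP] at h
      have hassoc : b ++ [Letter.plus, Letter.pm] = (b ++ [Letter.plus]) ++ [Letter.pm] := by
        simp
      rw [hassoc] at h
      exact middle_cut (b ++ [Letter.plus]) [Letter.pm] y
        (by simp [wordVal, Letter.val]) (by simp) hy0 h
    · rw [hP]; simp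

/-- Every '+−' Motzkin path reduces to the empty word under the signature
rewriting system. -/
theorem motzkin_reduces_to_empty (p : List Letter) (h : IsMotzkinWord p) :
    Relation.ReflTransGen Step p [] := by
  have key : ∀ n, ∀ p : List Letter, p.length < n → IsMotzkinWord p →
      Relation.ReflTransGen Step p [] := by
    intro n
    induction n with
    | zero => exact fun p hl _ => absurd hl (Nat.not_lt_zero _)
    | succ n ih =>
      intro p hl hp
      rcases exists_step p hp with rfl | ⟨q, hs, hq, hlen⟩
      · exact Relation.ReflTransGen.single (by simpa using Step.plus_minus [] [])
      · exact Relation.ReflTransGen.head hs (ih q (by omega) hq)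
  exact key (p.length + 1) p (by omega) h
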